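/- Let {u_1, …, u_n} be a b-orthogonal basis of U and write u = Σ_{k=1}^n c_k u_k and λ_k = b(u_k, u_k). Then E = E_{lr}(U, b, u) has a natural basis e_1, …, e_{l+n+r}, where e_1, …, e_l are the standard unit vectors of the first factor F^l, e_{l+j} = (0, …, 0, u_j, 0, …, 0) for j = 1, …, n, and e_{l+n+1}, …, e_{l+n+r} are the standard unit vectors of the last factor F^r, satisfying e_i e_j = 0 for i ≠ j, e_i² = e_{i+1} for i = 1, …, l−1 and for i = l+n+1, …, l+n+r−1, e_l² = Σ_{k=1}^n c_k e_{l+k}, e_{l+j}² = λ_j e_{l+n+1} for j = 1, …, n, and e_{l+n+r}² = 0. In particular E is an evolution algebra. -/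

import Mathlib

variable {F : Type*} [Field F] {A : Type*} [AddCommGroup A] [Module F A]

/-- For a bilinear multiplication `mul` on `A` and a submodule `S`, the preimage in `A` of the
annihilator of `A/S`, i.e. `{x | x·A ⊆ S and A·x ⊆ S}`. -/
def annSucc (mul : A →ₗ[F] A →ₗ[F] A) (S : Submodule F A) : Submodule F A where
  carrier := {x | ∀ y : A, mul x y ∈ S ∧ mul y x ∈ S}
  zero_mem' := by intro y; simp
  add_mem' := by
    intro a b ha hb y
    refine ⟨?_, ?_⟩
    · simpa [map_add, LinearMap.add_apply] using S.add_mem (ha y).1 (hb y).1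
    · simpa [map_add, LinearMap.add_apply] using S.add_mem (ha y).2 (hb y).2
  smul_mem' := by
    intro c a ha y
    refine ⟨?_, ?_⟩
    · simpa [map_smul, LinearMap.smul_apply] using S.smul_mem c (ha y).1
    · simpa [map_smul, LinearMap.smul_apply] using S.smul_mem c (ha y).2

/-- The upper annihilating series: `annSeq mul 0 = 0`, and
`annSeq mul (i+1)` is the preimage in `A` of `ann(A / annSeq mul i)`. -/
def annSeq (mul : A →ₗ[F] A →ₗ[F] A) : ℕ → Submodule F A
  | 0 => ⊥
  | i + 1 => annSucc mul (annSeq mul i)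

/-- A basis is natural if the product of distinct basis vectors vanishes. -/
def IsNaturalBasis {ι : Type*} (mul : A →ₗ[F] A →ₗ[F] A) (e : Module.Basis ι F A) : Prop :=
  ∀ i j, i ≠ j → mul (e i) (e j) = 0

/-- An evolution algebra: a commutative algebra admitting a natural basis. -/
def IsEvolutionAlgebra (mul : A →ₗ[F] A →ₗ[F] A) : Prop :=
  (∀ x y, mul x y = mul y x) ∧ ∃ (n : ℕ) (e : Module.Basis (Fin n) F A), IsNaturalBasis mul e

/-- The (nilpotent) algebra `(A, mul)` has type `[n_1, …, n_r]`:  `r` is the least index with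
`ann^r(A) = A` and `n_i = dim ann^i(A) - dim ann^{i-1}(A)`. -/
def HasType (mul : A →ₗ[F] A →ₗ[F] A) (L : List ℕ) : Prop :=
  annSeq mul L.length = ⊤ ∧ (∀ j < L.length, annSeq mul j ≠ ⊤) ∧
  ∀ (i : ℕ) (h : i < L.length),
    L.get ⟨i, h⟩ =
      Module.finrank F (annSeq mul (i + 1)) - Module.finrank F (annSeq mul i)


/-- The candidate natural basis of `E_{lr}(U,b,u) = F^l × U × F^r` (with `l = a+1`, `r = d+1`):
the standard unit vectors of `F^l`, then the orthogonal basis vectors of `U`, then the standard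
unit vectors of `F^r`. -/
def naturalFamilyElr (a d n : ℕ) {U : Type*} [AddCommGroup U] [Module F U]
    (uB : Fin n → U) :
    Fin ((a + 1) + (n + (d + 1))) → (Fin (a + 1) → F) × U × (Fin (d + 1) → F) :=
  Fin.addCases (fun i => (Pi.single i 1, 0, 0))
    (Fin.addCases (fun j : Fin n => (0, uB j, 0))
      (fun s : Fin (d + 1) => (0, 0, Pi.single s 1)))

/-- (Here `l = a + 1`, `r = d + 1`.) For a `b`-orthogonal basis `{u_1,…,u_n}`
of `U`, with `u = Σ c_k u_k` and `λ_k = b(u_k,u_k)`, the family `e` of statement 8 is a natural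
basis of `E = E_{lr}(U,b,u)`: `e_i e_j = 0` for `i ≠ j`, `e_i² = e_{i+1}` in the two scalar
blocks (except at their last slots), `e_l² = Σ_k c_k e_{l+k}`, `e_{l+j}² = λ_j e_{l+n+1}`, and
`e_{l+n+r}² = 0`.  In particular `E` is an evolution algebra. -/
theorem Elr_naturalBasis
    (h2 : (2 : F) ≠ 0)
    {U : Type*} [AddCommGroup U] [Module F U] [FiniteDimensional F U]
    (n : ℕ) (hdimU : Module.finrank F U = n)
    (b : U →ₗ[F] U →ₗ[F] F)
    (hbsymm : ∀ x y : U, b x y = b y x)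
    (hbnd : ∀ x : U, (∀ y : U, b x y = 0) → x = 0)
    (u : U) (hu : u ≠ 0)
    (a d : ℕ)  -- `l = a + 1`, `r = d + 1`
    (uB : Module.Basis (Fin n) F U)
    (horth : ∀ i j : Fin n, i ≠ j → b (uB i) (uB j) = 0)
    (c : Fin n → F) (hc : u = ∑ k : Fin n, c k • uB k)
    (mul : ((Fin (a + 1) → F) × U × (Fin (d + 1) → F)) →ₗ[F]
      ((Fin (a + 1) → F) × U × (Fin (d + 1) → F)) →ₗ[F]
      ((Fin (a + 1) → F) × U × (Fin (d + 1) → F)))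
    (hmul : ∀ (α γ : Fin (a + 1) → F) (x y : U) (β δ : Fin (d + 1) → F),
      mul (α, x, β) (γ, y, δ) =
        (Fin.cases (motive := fun _ => F) 0
            (fun j : Fin a => α j.castSucc * γ j.castSucc),
         (α (Fin.last a) * γ (Fin.last a)) • u,
         Fin.cases (motive := fun _ => F) (b x y)
            (fun j : Fin d => β j.castSucc * δ j.castSucc))) :
    LinearIndependent F (naturalFamilyElr (F := F) a d n uB) ∧
    Submodule.span F (Set.range (naturalFamilyElr (F := F) a d n uB)) = ⊤ ∧
    (∀ i j : Fin ((a + 1) + (n + (d + 1))), i ≠ j →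
      mul (naturalFamilyElr (F := F) a d n uB i) (naturalFamilyElr (F := F) a d n uB j) = 0) ∧
    (∀ j : Fin a,
      mul ((Pi.single j.castSucc 1, 0, 0) : (Fin (a + 1) → F) × U × (Fin (d + 1) → F))
          (Pi.single j.castSucc 1, 0, 0) = (Pi.single j.succ 1, 0, 0)) ∧
    (mul ((Pi.single (Fin.last a) 1, 0, 0) : (Fin (a + 1) → F) × U × (Fin (d + 1) → F))
        (Pi.single (Fin.last a) 1, 0, 0) =
      ∑ k : Fin n, c k • (((0, uB k, 0) : (Fin (a + 1) → F) × U × (Fin (d + 1) → F)))) ∧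
    (∀ j : Fin n,
      mul (((0, uB j, 0)) : (Fin (a + 1) → F) × U × (Fin (d + 1) → F)) (0, uB j, 0) =
        b (uB j) (uB j) •
          (((0, 0, Pi.single (0 : Fin (d + 1)) 1)) :
            (Fin (a + 1) → F) × U × (Fin (d + 1) → F))) ∧
    (∀ j : Fin d,
      mul (((0, 0, Pi.single j.castSucc 1)) : (Fin (a + 1) → F) × U × (Fin (d + 1) → F))
          (0, 0, Pi.single j.castSucc 1) = (0, 0, Pi.single j.succ 1)) ∧
    mul (((0, 0, Pi.single (Fin.last d) 1)) : (Fin (a + 1) → F) × U × (Fin (d + 1) → F))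
        (0, 0, Pi.single (Fin.last d) 1) = 0 ∧
    IsEvolutionAlgebra mul := by
  classical
  -- A convenient abbreviation
  set e := naturalFamilyElr (F := F) a d n uB with he
  -- the reindexing equivalence
  let σ : (Fin (a+1) ⊕ (Fin n ⊕ Fin (d+1))) ≃ Fin ((a + 1) + (n + (d + 1))) :=
    ((Equiv.refl (Fin (a+1))).sumCongr finSumFinEquiv).trans finSumFinEquiv
  let B : Module.Basis (Fin ((a + 1) + (n + (d + 1)))) F
      ((Fin (a + 1) → F) × U × (Fin (d + 1) → F)) :=
    ((Pi.basisFun F (Fin (a+1))).prod (uB.prod (Pi.basisFun F (Fin (d+1))))).reindex σ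
  have hcoe : ∀ i, B i = e i := by
    intro i
    induction i using Fin.addCases with
    | left i =>
      have hσ : σ.symm (Fin.castAdd (n + (d+1)) i) = Sum.inl i := by
        simp [σ, Equiv.sumCongr_symm, Equiv.symm_trans_apply]
      simp [B, he, naturalFamilyElr, Module.Basis.reindex_apply, hσ, Module.Basis.prod_apply,
        Pi.basisFun_apply, Prod.ext_iff]
    | right i =>
      induction i using Fin.addCases with
      | left j =>
        have hσ : σ.symm (Fin.natAdd (a+1) (Fin.castAdd (d+1) j)) = Sum.inr (Sum.inl j) := by
          simp [σ, Equiv.sumCongr_symm, Equiv.symm_trans_apply]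
        simp [B, he, naturalFamilyElr, Module.Basis.reindex_apply, hσ, Module.Basis.prod_apply,
          Prod.ext_iff]
      | right s =>
        have hσ : σ.symm (Fin.natAdd (a+1) (Fin.natAdd n s)) = Sum.inr (Sum.inr s) := by
          simp [σ, Equiv.sumCongr_symm, Equiv.symm_trans_apply]
        simp [B, he, naturalFamilyElr, Module.Basis.reindex_apply, hσ, Module.Basis.prod_apply,
          Pi.basisFun_apply, Prod.ext_iff]
  have hBe : ⇑B = e := funext hcoe
  -- generic vanishing lemma
  have key0 : ∀ (α γ : Fin (a+1) → F) (x y : U) (β δ : Fin (d+1) → F),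
      (∀ t, α t * γ t = 0) → b x y = 0 →
      (∀ t : Fin d, β t.castSucc * δ t.castSucc = 0) →
      mul (α, x, β) (γ, y, δ) = 0 := by
    intro α γ x y β δ h1 h2 h3
    rw [hmul]
    refine Prod.ext ?_ (Prod.ext ?_ ?_)
    · funext t
      induction t using Fin.cases with
      | zero => simp
      | succ j => simpa using h1 j.castSucc
    · simpa using Or.inl (h1 (Fin.last a))
    · funext t
      induction t using Fin.cases with
      | zero => simpa using h2
      | succ j => simpa using h3 j
  -- singles with distinct indices multiply to zero pointwise
  have hsing : ∀ {m : ℕ} (i j : Fin m), i ≠ j → ∀ t, (Pi.single (M := fun _ => F) i 1) t * (Pi.single (M := fun _ => F) j 1) t = 0 := by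
    intro m i j hij t
    simp only [Pi.single_apply]
    split_ifs with h1 h2
    · exact absurd (h1.symm.trans h2) hij
    all_goals ring
  -- natural basis property
  have hnat : ∀ i j : Fin ((a + 1) + (n + (d + 1))), i ≠ j → mul (e i) (e j) = 0 := by
    intro i j hij
    induction i using Fin.addCases with
    | left i =>
      induction j using Fin.addCases with
      | left j =>
        have hij' : i ≠ j := fun h => hij (by rw [h])
        simp only [he, naturalFamilyElr, Fin.addCases_left]
        exact key0 _ _ _ _ _ _ (hsing i j hij') (by simp) (by simp)
      | right j =>
        simp only [he, naturalFamilyElr, Fin.addCases_left, Fin.addCases_right]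
        induction j using Fin.addCases with
        | left s =>
          simp only [Fin.addCases_left]
          exact key0 _ _ _ _ _ _ (by simp) (by simp) (by simp)
        | right s =>
          simp only [Fin.addCases_right]
          exact key0 _ _ _ _ _ _ (by simp) (by simp) (by simp)
    | right i =>
      induction j using Fin.addCases with
      | left j =>
        simp only [he, naturalFamilyElr, Fin.addCases_left, Fin.addCases_right]
        induction i using Fin.addCases with
        | left s =>
          simp only [Fin.addCases_left]
          exact key0 _ _ _ _ _ _ (by simp) (by simp) (by simp)
        | right s =>
          simp only [Fin.addCases_right]
          exact key0 _ _ _ _ _ _ (by simp) (by simp) (by simp)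
      | right j =>
        have hij' : i ≠ j := fun h => hij (by rw [h])
        simp only [he, naturalFamilyElr, Fin.addCases_right]
        induction i using Fin.addCases with
        | left s =>
          induction j using Fin.addCases with
          | left t =>
            have hst : s ≠ t := fun h => hij' (by rw [h])
            simp only [Fin.addCases_left]
            exact key0 _ _ _ _ _ _ (by simp) (horth s t hst) (by simp)
          | right t =>
            simp only [Fin.addCases_left, Fin.addCases_right]
            exact key0 _ _ _ _ _ _ (by simp) (by simp) (by simp)
        | right s =>
          induction j using Fin.addCases with
          | left t =>
            simp only [Fin.addCases_left, Fin.addCases_right]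
            exact key0 _ _ _ _ _ _ (by simp) (by simp) (by simp)
          | right t =>
            have hst : s ≠ t := fun h => hij' (by rw [h])
            simp only [Fin.addCases_right]
            exact key0 _ _ _ _ _ _ (by simp) (by simp) (fun r => hsing s t hst r.castSucc)
  refine ⟨hBe ▸ B.linearIndependent, ?_, hnat, ?_, ?_, ?_, ?_, ?_, ?_⟩
  · rw [← hBe]; exact B.span_eq
  · -- first block squares
    intro j
    rw [hmul]
    refine Prod.ext ?_ (Prod.ext ?_ ?_)
    · funext t
      induction t using Fin.cases with
      | zero => simp [Pi.single_eq_of_ne (Fin.succ_ne_zero j).symm]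
      | succ k =>
        simp only [Fin.cases_succ, Pi.single_apply, Fin.castSucc_inj, Fin.succ_inj]
        split_ifs <;> ring
    · simp [Pi.single_eq_of_ne (Fin.castSucc_lt_last j).ne']
    · funext t
      induction t using Fin.cases with
      | zero => simp
      | succ k => simp
  · -- e_l squared
    rw [hmul]
    have hsum : (∑ k : Fin n, c k • ((0, uB k, 0) :
        (Fin (a + 1) → F) × U × (Fin (d + 1) → F))) = (0, ∑ k : Fin n, c k • uB k, 0) := by
      simp [Prod.ext_iff, Prod.fst_sum, Prod.snd_sum]
    rw [hsum, ← hc]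
    refine Prod.ext ?_ (Prod.ext ?_ ?_)
    · funext t
      induction t using Fin.cases with
      | zero => simp
      | succ k => simp [Pi.single_eq_of_ne (Fin.castSucc_lt_last k).ne]
    · simp
    · funext t
      induction t using Fin.cases with
      | zero => simp
      | succ k => simp
  · -- middle squares
    intro j
    rw [hmul]
    refine Prod.ext ?_ (Prod.ext ?_ ?_)
    · funext t
      induction t using Fin.cases with
      | zero => simp
      | succ k => simp
    · simp
    · funext t
      induction t using Fin.cases with
      | zero => simp
      | succ k => simp [Pi.single_eq_of_ne (Fin.succ_ne_zero k)]
  · -- last block squares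
    intro j
    rw [hmul]
    refine Prod.ext ?_ (Prod.ext ?_ ?_)
    · funext t
      induction t using Fin.cases with
      | zero => simp
      | succ k => simp
    · simp
    · funext t
      induction t using Fin.cases with
      | zero => simp [Pi.single_eq_of_ne (Fin.succ_ne_zero j).symm]
      | succ k =>
        simp only [Fin.cases_succ, Pi.single_apply, Fin.castSucc_inj, Fin.succ_inj]
        split_ifs <;> ring
  · -- last element squared is zero
    exact key0 _ _ _ _ _ _ (by simp) (by simp)
      (fun t => by simp [Pi.single_eq_of_ne (Fin.castSucc_lt_last t).ne])
  · -- evolution algebra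
    refine ⟨?_, (a + 1) + (n + (d + 1)), B, ?_⟩
    · intro x y
      obtain ⟨α, x', β⟩ := x
      obtain ⟨γ, y', δ⟩ := y
      rw [hmul, hmul]
      refine Prod.ext ?_ (Prod.ext ?_ ?_)
      · funext t
        induction t using Fin.cases with
        | zero => simp
        | succ k => simp [mul_comm]
      · simp [mul_comm]
      · funext t
        induction t using Fin.cases with
        | zero => simp [hbsymm]
        | succ k => simp [mul_comm]
    · intro i j hij
      rw [hcoe, hcoe]
      exact hnat i j hij
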